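/- arXiv:2003.04455 — 2 statements merged into one kernel-verified Lean document; each statement's English description precedes it below -/
import Mathlib

section
/- Let ω₁, ω₂ : 𝔻 → ℂ be analytic with |ω₁(z)| < 1 and |ω₂(z)| < 1 on the unit disk 𝔻, let λ ∈ ℂ with |λ| = 1, and let t ∈ [0,1]. Suppose h₁, h₂, g₁, g₂ are analytic on 𝔻 with gⱼ' = ωⱼ hⱼ', hⱼ' nonvanishing, and h₁ - λg₁ = h₂ - λg₂ (so (h₁ - λg₁)' = (h₂ - λg₂)' =: φ' is nonvanishing). Then the function ω₃ = (t g₁' + (1-t) g₂')/(t h₁' + (1-t) h₂') satisfies |ω₃(z)| < 1 for all z ∈ 𝔻. -/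
open Complex Metric

lemma re_pos_of_norm_lt_one {u : ℂ} (hu : ‖u‖ < 1) : 0 < ((1 + u) / (1 - u)).re := by
  have hns : Complex.normSq u < 1 := by
    have h := Complex.sq_norm u
    nlinarith [norm_nonneg u]
  rw [Complex.div_re]
  rw [Complex.normSq_apply] at hns
  simp only [Complex.add_re, Complex.add_im, Complex.sub_re, Complex.sub_im,
    Complex.one_re, Complex.one_im, Complex.normSq_apply]
  rw [← add_div]
  apply div_pos
  · nlinarith
  · have h1 : u.re < 1 := by nlinarith [sq_nonneg u.im]
    nlinarith [sq_nonneg u.im, mul_pos (sub_pos.2 h1) (sub_pos.2 h1)]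

lemma norm_sub_one_lt_norm_add_one {S : ℂ} (hS : 0 < S.re) : ‖S - 1‖ < ‖S + 1‖ := by
  have h1 : Complex.normSq (S - 1) < Complex.normSq (S + 1) := by
    simp only [Complex.normSq_apply, Complex.sub_re, Complex.sub_im, Complex.add_re,
      Complex.add_im, Complex.one_re, Complex.one_im]
    nlinarith
  have e1 := Complex.sq_norm (S - 1)
  have e2 := Complex.sq_norm (S + 1)
  nlinarith [norm_nonneg (S - 1), norm_nonneg (S + 1)]

lemma key_alg (a b w₁ w₂ lam : ℂ) (t : ℝ)
    (hu₁ : ‖lam * w₁‖ < 1) (hu₂ : ‖lam * w₂‖ < 1)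
    (ht : t ∈ Set.Icc (0 : ℝ) 1) (ha : a ≠ 0) (hlam : ‖lam‖ = 1)
    (heq : a - lam * (w₁ * a) = b - lam * (w₂ * b)) :
    ‖(↑t * (w₁ * a) + (1 - ↑t) * (w₂ * b)) / (↑t * a + (1 - ↑t) * b)‖ < 1 := by
  have hd₁ : (1 : ℂ) - lam * w₁ ≠ 0 := by
    intro h
    rw [sub_eq_zero] at h
    rw [← h] at hu₁; simp at hu₁
  have hd₂ : (1 : ℂ) - lam * w₂ ≠ 0 := by
    intro h
    rw [sub_eq_zero] at h
    rw [← h] at hu₂; simp at hu₂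
  have hkey : a * (1 - lam * w₁) = b * (1 - lam * w₂) := by linear_combination heq
  have hφne : a * (1 - lam * w₁) ≠ 0 := mul_ne_zero ha hd₁
  set S : ℂ := ↑t * ((1 + lam * w₁) / (1 - lam * w₁)) +
      (1 - ↑t) * ((1 + lam * w₂) / (1 - lam * w₂)) with hS
  have hSre : 0 < S.re := by
    have p₁ := re_pos_of_norm_lt_one hu₁
    have p₂ := re_pos_of_norm_lt_one hu₂
    rw [hS]
    simp only [Complex.add_re, Complex.mul_re, Complex.ofReal_re, Complex.ofReal_im,
      Complex.sub_re, Complex.sub_im, Complex.one_re, Complex.one_im,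
      zero_mul, sub_zero, zero_sub, neg_mul, neg_zero]
    obtain ⟨ht0, ht1⟩ := ht
    rcases eq_or_lt_of_le ht0 with h0 | h0
    · rw [← h0]; simpa using p₂
    · rcases eq_or_lt_of_le ht1 with h1 | h1
      · rw [h1]; simpa using p₁
      · nlinarith
  have hid1 : 2 * (lam * (↑t * (w₁ * a) + (1 - ↑t) * (w₂ * b))) =
      (S - 1) * (a * (1 - lam * w₁)) := by
    rw [hS]
    field_simp
    linear_combination (-(2 * (1 - (t:ℂ)) * lam * w₂)) * hkey
  have hid2 : 2 * (↑t * a + (1 - ↑t) * b) =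
      (S + 1) * (a * (1 - lam * w₁)) := by
    rw [hS]
    field_simp
    linear_combination (-(2 * (1 - (t:ℂ)))) * hkey
  have hlt : ‖S - 1‖ < ‖S + 1‖ := norm_sub_one_lt_norm_add_one hSre
  have hnorm : ‖↑t * (w₁ * a) + (1 - ↑t) * (w₂ * b)‖ < ‖↑t * a + (1 - ↑t) * b‖ := by
    have e1 := congrArg norm hid1
    have e2 := congrArg norm hid2
    rw [norm_mul, norm_mul, norm_mul, hlam, one_mul, Complex.norm_ofNat] at e1
    rw [norm_mul, norm_mul, Complex.norm_ofNat] at e2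
    have hφpos : 0 < ‖a * (1 - lam * w₁)‖ := norm_pos_iff.mpr hφne
    nlinarith [norm_nonneg (S - 1), norm_nonneg (S + 1)]
  have hDne : (↑t * a + (1 - ↑t) * b) ≠ 0 := by
    intro h
    rw [h, norm_zero] at hnorm
    exact absurd hnorm (not_lt.mpr (norm_nonneg _))
  rw [norm_div, div_lt_one (norm_pos_iff.mpr hDne)]
  exact hnorm

/-- Lemma 2.1 (local univalence of linear combinations).
If `f_j = h_j + conj g_j` are sense-preserving with dilatations `ω_j` (`g_j' = ω_j h_j'`,
`h_j' ≠ 0`, `|ω_j| < 1`) and `h₁ - λ g₁ = h₂ - λ g₂` on the unit disk for some unimodular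
`λ`, then the dilatation `ω₃ = (t g₁' + (1-t) g₂')/(t h₁' + (1-t) h₂')` of the linear
combination satisfies `|ω₃| < 1` on the unit disk. -/
theorem linear_combination_dilatation_lt_one
    (h₁ h₂ g₁ g₂ ω₁ ω₂ : ℂ → ℂ) (lam : ℂ) (t : ℝ)
    (hh₁ : DifferentiableOn ℂ h₁ (ball 0 1)) (hh₂ : DifferentiableOn ℂ h₂ (ball 0 1))
    (hg₁ : DifferentiableOn ℂ g₁ (ball 0 1)) (hg₂ : DifferentiableOn ℂ g₂ (ball 0 1))
    (hω₁a : DifferentiableOn ℂ ω₁ (ball 0 1)) (hω₂a : DifferentiableOn ℂ ω₂ (ball 0 1))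
    (hω₁ : ∀ z ∈ ball (0 : ℂ) 1, ‖ω₁ z‖ < 1)
    (hω₂ : ∀ z ∈ ball (0 : ℂ) 1, ‖ω₂ z‖ < 1)
    (hlam : ‖lam‖ = 1) (ht : t ∈ Set.Icc (0 : ℝ) 1)
    (hdil₁ : ∀ z ∈ ball (0 : ℂ) 1, deriv g₁ z = ω₁ z * deriv h₁ z)
    (hdil₂ : ∀ z ∈ ball (0 : ℂ) 1, deriv g₂ z = ω₂ z * deriv h₂ z)
    (hne₁ : ∀ z ∈ ball (0 : ℂ) 1, deriv h₁ z ≠ 0)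
    (hne₂ : ∀ z ∈ ball (0 : ℂ) 1, deriv h₂ z ≠ 0)
    (hshear : ∀ z ∈ ball (0 : ℂ) 1, h₁ z - lam * g₁ z = h₂ z - lam * g₂ z) :
    ∀ z ∈ ball (0 : ℂ) 1,
      ‖(↑t * deriv g₁ z + (1 - ↑t) * deriv g₂ z) /
        (↑t * deriv h₁ z + (1 - ↑t) * deriv h₂ z)‖ < 1 := by
  intro z hz
  have hmem : ball (0 : ℂ) 1 ∈ nhds z := isOpen_ball.mem_nhds hz
  have dg₁ : DifferentiableAt ℂ g₁ z := hg₁.differentiableAt hmem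
  have dg₂ : DifferentiableAt ℂ g₂ z := hg₂.differentiableAt hmem
  have heq : deriv (fun w => h₁ w - lam * g₁ w) z = deriv (fun w => h₂ w - lam * g₂ w) z := by
    apply Filter.EventuallyEq.deriv_eq
    filter_upwards [hmem] with w hw using hshear w hw
  rw [deriv_fun_sub (hh₁.differentiableAt hmem) (dg₁.const_mul lam),
    deriv_fun_sub (hh₂.differentiableAt hmem) (dg₂.const_mul lam),
    deriv_const_mul lam dg₁, deriv_const_mul lam dg₂, hdil₁ z hz, hdil₂ z hz] at heq
  rw [hdil₁ z hz, hdil₂ z hz]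
  have hu₁ : ‖lam * ω₁ z‖ < 1 := by
    rw [norm_mul, hlam, one_mul]; exact hω₁ z hz
  have hu₂ : ‖lam * ω₂ z‖ < 1 := by
    rw [norm_mul, hlam, one_mul]; exact hω₂ z hz
  exact key_alg _ _ _ _ _ t hu₁ hu₂ ht (hne₁ z hz) hlam heq
end

section
/- Fix γ ∈ [0,1], α ∈ [-1,1], and θ ∈ (0,π). Define p̃(z) = γ·(1 - 2αz + z²)/(1 - z²) + (1-γ)·(1 - z²)/((1 + z e^{iθ})(1 + z e^{-iθ})) for z in the open unit disk 𝔻 (where 1 - z² ≠ 0 and (1+ze^{iθ})(1+ze^{-iθ}) ≠ 0 hold automatically for |z| < 1 and θ ∈ (0,π)). Then Re(p̃(z)) > 0 for all z ∈ 𝔻. -/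
open Complex
open Metric

lemma core_pos (a x y : ℝ) (ha : |a| ≤ 1) (h : x^2 + y^2 < 1) : 0 < 1 + (x^2+y^2) - 2*a*x := by
  have hx1 : x^2 < 1 := by nlinarith [sq_nonneg y]
  have habs : |x| < 1 := abs_lt.2 ⟨by nlinarith, by nlinarith⟩
  have h2x : 2*|x| < 1 + x^2 := by nlinarith [_root_.sq_abs x]
  have h3 : a*x ≤ |x| := by
    calc a*x ≤ |a*x| := le_abs_self _
    _ = |a| * |x| := abs_mul a x
    _ ≤ 1 * |x| := mul_le_mul_of_nonneg_right ha (abs_nonneg x)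
    _ = |x| := one_mul _
  nlinarith [sq_nonneg y]

lemma re_frac1 (a : ℝ) (ha : |a| ≤ 1) (z : ℂ) (hz : normSq z < 1) :
    0 < ((1 - 2*a*z + z^2)/(1-z^2)).re := by
  set x := z.re
  set y := z.im
  have hs : x^2 + y^2 < 1 := by
    have := hz; rwa [normSq_apply, ← sq, ← sq] at this
  have key : 0 < (1 - (x^2+y^2)) * (1 + (x^2+y^2) - 2*a*x) :=
    mul_pos (by linarith) (core_pos a x y ha hs)
  have hd : (1:ℂ) - z^2 ≠ 0 := by
    intro h
    have h1 : z^2 = 1 := by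
      have := sub_eq_zero.mp h; exact this.symm
    have h2 := congrArg normSq h1
    rw [map_pow, map_one] at h2
    nlinarith [normSq_nonneg z]
  have hnsq : 0 < normSq (1 - z^2) := normSq_pos.2 hd
  rw [Complex.div_re, ← add_div]
  apply div_pos ?_ hnsq
  have e1 : ((1:ℂ) - 2*a*z + z^2).re = 1 - 2*a*x + (x^2 - y^2) := by
    simp [pow_two, mul_re]; try ring
  have e2 : ((1:ℂ) - 2*a*z + z^2).im = -(2*a*y) + 2*x*y := by
    simp [pow_two, mul_im]; try ring
  have e3 : ((1:ℂ) - z^2).re = 1 - (x^2 - y^2) := by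
    simp [pow_two, mul_re]; try ring
  have e4 : ((1:ℂ) - z^2).im = -(2*x*y) := by
    simp [pow_two, mul_im]; try ring
  rw [e1, e2, e3, e4]
  nlinarith [key]

lemma re_frac2 (c : ℝ) (hc : |c| ≤ 1) (z : ℂ) (hz : normSq z < 1) :
    0 < ((1 - z^2)/(1 + 2*c*z + z^2)).re := by
  set x := z.re
  set y := z.im
  have hs : x^2 + y^2 < 1 := by
    have := hz; rwa [normSq_apply, ← sq, ← sq] at this
  have key : 0 < (1 - (x^2+y^2)) * (1 + (x^2+y^2) + 2*c*x) := by
    have := core_pos (-c) x y (by rwa [abs_neg]) hs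
    nlinarith
  have e1 : ((1:ℂ) + 2*c*z + z^2).re = 1 + 2*c*x + (x^2 - y^2) := by
    simp [pow_two, mul_re]; try ring
  have e2 : ((1:ℂ) + 2*c*z + z^2).im = 2*c*y + 2*x*y := by
    simp [pow_two, mul_im]; try ring
  have e3 : ((1:ℂ) - z^2).re = 1 - (x^2 - y^2) := by
    simp [pow_two, mul_re]; try ring
  have e4 : ((1:ℂ) - z^2).im = -(2*x*y) := by
    simp [pow_two, mul_im]; try ring
  have hd : (1:ℂ) + 2*c*z + z^2 ≠ 0 := by
    intro h
    have h1 : ((1:ℂ) + 2*c*z + z^2).re = 0 := by rw [h]; rfl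
    have h2 : ((1:ℂ) + 2*c*z + z^2).im = 0 := by rw [h]; rfl
    rw [e1] at h1; rw [e2] at h2
    have hz0 : (1 - (x^2+y^2)) * (1 + (x^2+y^2) + 2*c*x) = 0 := by
      linear_combination (1-(x^2-y^2))*h1 + (-(2*x*y))*h2
    linarith
  have hnsq : 0 < normSq (1 + 2*c*z + z^2) := normSq_pos.2 hd
  rw [Complex.div_re, ← add_div]
  apply div_pos ?_ hnsq
  rw [e1, e2, e3, e4]
  nlinarith [key]

/-- the function `p̃` from Corollary 3.2 has positive real part on the disk. -/
theorem re_ptilde_pos (γ α θ : ℝ) (hγ : γ ∈ Set.Icc (0 : ℝ) 1)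
    (hα : α ∈ Set.Icc (-1 : ℝ) 1) (hθ : θ ∈ Set.Ioo 0 Real.pi) :
    ∀ z ∈ ball (0 : ℂ) 1,
      0 < ((γ : ℂ) * (1 - 2 * α * z + z ^ 2) / (1 - z ^ 2) +
        (1 - (γ : ℂ)) * (1 - z ^ 2) /
          ((1 + z * exp (I * θ)) * (1 + z * exp (-I * θ)))).re := by
  intro z hz
  have hnz : normSq z < 1 := by
    rw [mem_ball_zero_iff] at hz
    have : normSq z = ‖z‖^2 := by exact normSq_eq_norm_sq z
    nlinarith [norm_nonneg z]
  have he : exp (I*(θ:ℂ)) * exp (-I*(θ:ℂ)) = 1 := by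
    rw [← exp_add]; ring_nf; exact exp_zero
  have hsum : exp (I*(θ:ℂ)) + exp (-I*(θ:ℂ)) = 2*((Real.cos θ : ℝ):ℂ) := by
    rw [show I*(θ:ℂ) = (θ:ℂ)*I by ring, show -I*(θ:ℂ) = ((-θ:ℝ):ℂ)*I by push_cast; ring,
      exp_mul_I, exp_mul_I]
    push_cast
    simp [Complex.cos_neg, Complex.sin_neg, ← Complex.ofReal_cos]
    ring
  have hprod : (1 + z * exp (I*(θ:ℂ))) * (1 + z * exp (-I*(θ:ℂ)))
      = 1 + 2*((Real.cos θ:ℝ):ℂ)*z + z^2 := by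
    linear_combination z^2 * he + z * hsum
  rw [hprod, mul_div_assoc, mul_div_assoc,
    show (1:ℂ) - ↑γ = ((1-γ:ℝ):ℂ) by push_cast; ring, add_re,
    re_ofReal_mul, re_ofReal_mul]
  have hA := re_frac1 α (abs_le.2 ⟨hα.1, hα.2⟩) z hnz
  have hB := re_frac2 (Real.cos θ) (Real.abs_cos_le_one θ) z hnz
  rcases le_total ((1 - 2*(α:ℂ)*z + z^2)/(1-z^2)).re (((1:ℂ) - z^2)/(1 + 2*(Real.cos θ:ℂ)*z + z^2)).re with h|h <;>
    nlinarith [hγ.1, hγ.2]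
end
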